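/- Subject reduction for the sequential λ-calculus: if Γ ⊢ N : τ and N β-reduces in one step to M, then Γ ⊢ M : τ. -/

import Mathlib

/-- Terms of the sequential λ-calculus in de Bruijn representation
(so terms are automatically identified up to α-equivalence):
nil `*`, variable prefix `x.M`, push/application `[N].M`,
and pop/abstraction `<x>.M`. -/
inductive STm : Type
  | star : STm
  | var  : Nat → STm → STm
  | push : STm → STm → STm
  | pop  : STm → STm

namespace STm

/-- Lifting of a renaming under a binder. -/
def liftF (f : Nat → Nat) : Nat → Nat
  | 0 => 0
  | n+1 => f n + 1

/-- Renaming of de Bruijn indices. -/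
def rename (f : Nat → Nat) : STm → STm
  | star => star
  | var n M => var (f n) (rename f M)
  | push N M => push (rename f N) (rename f M)
  | pop M => pop (rename (liftF f) M)

/-- Capture-avoiding composition `N ; M`. -/
def comp : STm → STm → STm
  | star, P => P
  | var n N, P => var n (comp N P)
  | push Q N, P => push Q (comp N P)
  | pop N, P => pop (comp N (rename Nat.succ P))

/-- Lifting of a substitution under a binder. -/
def liftS (σ : Nat → STm) : Nat → STm
  | 0 => var 0 star
  | n+1 => rename Nat.succ (σ n)

/-- Capture-avoiding simultaneous substitution; note
`{N/x}(x.M) = N ; {N/x}M`. -/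
def subst (σ : Nat → STm) : STm → STm
  | star => star
  | var n M => comp (σ n) (subst σ M)
  | push N M => push (subst σ N) (subst σ M)
  | pop M => pop (subst (liftS σ) M)

/-- Capture-avoiding substitution `{N/x}M` of `N` for the variable bound
immediately outside `M`. -/
def subst1 (N : STm) : STm → STm :=
  subst (fun n => match n with | 0 => N | n+1 => var n star)

end STm

/-- Machine states: a stack of terms (written bottom-first, so the top
element is the last element of the list) together with a term. -/
abbrev SState := List STm × STm

/-- The transitions of the sequential stack machine:
`(S, [N].M) → (S·N, M)` and `(S·N, <x>.M) → (S, {N/x}M)`. -/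
inductive SMStep : SState → SState → Prop
  | push (S : List STm) (N M : STm) : SMStep (S, .push N M) (S ++ [N], M)
  | pop (S : List STm) (N M : STm) : SMStep (S ++ [N], .pop M) (S, STm.subst1 N M)

/-- A run of the sequential machine: a finite sequence of transitions. -/
def SRun : SState → SState → Prop := Relation.ReflTransGen SMStep

/-- Sequential types `ρ_n…ρ_1 ⟹ τ_1…τ_m`: an implication between two
finite vectors of sequential types. The first list is the input vector
as written (i.e. `arr (rev ρ⃗) τ⃗` represents `rev(ρ⃗) ⟹ τ⃗`). -/
inductive STy : Type
  | arr : List STy → List STy → STy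

/-- Typing judgments `Γ ⊢ M : τ` of the sequential λ-calculus, with the
context `Γ` a finite map from (de Bruijn) variables to types, given as a
list. -/
inductive Typing : List STy → STm → STy → Prop
  | star (Γ : List STy) (τs : List STy) :
      Typing Γ .star (.arr τs.reverse τs)
  | var (Γ : List STy) (n : Nat) (M : STm) (ρs σs τs υs : List STy) :
      Γ[n]? = some (.arr ρs.reverse σs) →
      Typing Γ M (.arr (σs.reverse ++ τs.reverse) υs) →
      Typing Γ (.var n M) (.arr (ρs.reverse ++ τs.reverse) υs)
  | abs (Γ : List STy) (M : STm) (ρ : STy) (σs τs : List STy) :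
      Typing (ρ :: Γ) M (.arr σs.reverse τs) →
      Typing Γ (.pop M) (.arr (ρ :: σs.reverse) τs)
  | app (Γ : List STy) (N M : STm) (ρ : STy) (σs τs : List STy) :
      Typing Γ N ρ →
      Typing Γ M (.arr (ρ :: σs.reverse) τs) →
      Typing Γ (.push N M) (.arr σs.reverse τs)

/-- β-reduction of the sequential λ-calculus: `[N].<x>.M → {N/x}M`,
closed under all contexts. -/
inductive SStep : STm → STm → Prop
  | beta (N M : STm) : SStep (.push N (.pop M)) (STm.subst1 N M)
  | var {M M' : STm} (n : Nat) : SStep M M' → SStep (.var n M) (.var n M')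
  | pushL {M M' : STm} (N : STm) : SStep M M' → SStep (.push N M) (.push N M')
  | pushArg {N N' : STm} (M : STm) : SStep N N' → SStep (.push N M) (.push N' M)
  | pop {M M' : STm} : SStep M M' → SStep (.pop M) (.pop M')

/-- An equivalent presentation of the typing judgment using plain lists
(no `reverse` in the rule shapes). -/
inductive Typing' : List STy → STm → STy → Prop
  | star (Γ : List STy) (τs : List STy) :
      Typing' Γ .star (.arr τs.reverse τs)
  | var (Γ : List STy) (n : Nat) (M : STm) (A B C D : List STy) :
      Γ[n]? = some (.arr A B) →
      Typing' Γ M (.arr (B.reverse ++ C) D) →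
      Typing' Γ (.var n M) (.arr (A ++ C) D)
  | abs (Γ : List STy) (M : STm) (ρ : STy) (A B : List STy) :
      Typing' (ρ :: Γ) M (.arr A B) →
      Typing' Γ (.pop M) (.arr (ρ :: A) B)
  | app (Γ : List STy) (N M : STm) (ρ : STy) (A B : List STy) :
      Typing' Γ N ρ →
      Typing' Γ M (.arr (ρ :: A) B) →
      Typing' Γ (.push N M) (.arr A B)

lemma typing_to_typing' {Γ M τ} (h : Typing Γ M τ) : Typing' Γ M τ := by
  induction h with
  | star Γ τs => exact Typing'.star Γ τs
  | var Γ n M ρs σs τs υs hget hM ih =>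
      exact Typing'.var Γ n M ρs.reverse σs τs.reverse υs hget ih
  | abs Γ M ρ σs τs hM ih => exact Typing'.abs Γ M ρ σs.reverse τs ih
  | app Γ N M ρ σs τs hN hM ihN ihM => exact Typing'.app Γ N M ρ σs.reverse τs ihN ihM

lemma typing'_to_typing {Γ M τ} (h : Typing' Γ M τ) : Typing Γ M τ := by
  induction h with
  | star Γ τs => exact Typing.star Γ τs
  | var Γ n M A B C D hget hM ihM =>
      simpa using Typing.var Γ n M A.reverse B C.reverse D (by simpa using hget)
        (by simpa using ihM)
  | abs Γ M ρ A B hM ih =>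
      simpa using Typing.abs Γ M ρ A.reverse B (by simpa using ih)
  | app Γ N M ρ A B hN hM ihN ihM =>
      simpa using Typing.app Γ N M ρ A.reverse B ihN (by simpa using ihM)

lemma rename_typing' {Γ M τ} (h : Typing' Γ M τ) :
    ∀ {Δ : List STy} {f : Nat → Nat},
      (∀ n ty, Γ[n]? = some ty → Δ[f n]? = some ty) →
      Typing' Δ (M.rename f) τ := by
  induction h with
  | star Γ τs => intro Δ f hf; exact Typing'.star Δ τs
  | var Γ n M A B C D hget hM ih =>
      intro Δ f hf
      exact Typing'.var Δ (f n) (M.rename f) A B C D (hf n _ hget) (ih hf)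
  | abs Γ M ρ A B hM ih =>
      intro Δ f hf
      refine Typing'.abs Δ (M.rename (STm.liftF f)) ρ A B (ih ?_)
      intro n ty hn
      cases n with
      | zero => simpa [STm.liftF] using hn
      | succ n => simpa [STm.liftF] using hf n ty (by simpa using hn)
  | app Γ N M ρ A B hN hM ihN ihM =>
      intro Δ f hf
      exact Typing'.app Δ (N.rename f) (M.rename f) ρ A B (ihN hf) (ihM hf)

lemma comp_typing' {Γ N τ} (h : Typing' Γ N τ) :
    ∀ {A B : List STy} {M : STm} {C D : List STy},
      τ = .arr A B → Typing' Γ M (.arr (B.reverse ++ C) D) →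
      Typing' Γ (N.comp M) (.arr (A ++ C) D) := by
  induction h with
  | star Γ τs =>
      intro A B M C D hτ hM
      cases hτ
      simpa [STm.comp] using hM
  | var Γ n N' A' B' C' D' hget hN' ih =>
      intro A B M C D hτ hM
      cases hτ
      have h1 : Typing' Γ (N'.comp M) (.arr (B'.reverse ++ (C' ++ C)) D) := by
        simpa [List.append_assoc] using ih rfl hM
      have := Typing'.var Γ n (N'.comp M) A' B' (C' ++ C) D hget h1
      simpa [STm.comp, List.append_assoc] using this
  | abs Γ M' ρ A' B' hM' ih =>
      intro A B M C D hτ hM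
      cases hτ
      have hMr : Typing' (ρ :: Γ) (M.rename Nat.succ) (.arr (B'.reverse ++ C) D) := by
        refine rename_typing' hM ?_
        intro n ty hn; simpa using hn
      have := Typing'.abs Γ (M'.comp (M.rename Nat.succ)) ρ (A' ++ C) D (ih rfl hMr)
      simpa [STm.comp] using this
  | app Γ P N' ρ A' B' hP hN' ihP ihN' =>
      intro A B M C D hτ hM
      cases hτ
      have h1 : Typing' Γ (N'.comp M) (.arr (ρ :: (A' ++ C)) D) := by
        simpa using ihN' rfl hM
      simpa [STm.comp] using Typing'.app Γ P (N'.comp M) ρ (A' ++ C) D hP h1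

lemma var_star_typing' {Δ : List STy} {n : Nat} {A B : List STy}
    (h : Δ[n]? = some (.arr A B)) : Typing' Δ (.var n .star) (.arr A B) := by
  have hstar : Typing' Δ .star (.arr (B.reverse ++ []) B) := by
    simpa using Typing'.star Δ B
  simpa using Typing'.var Δ n .star A B [] B h hstar

lemma subst_typing' {Γ M τ} (h : Typing' Γ M τ) :
    ∀ {Δ : List STy} {σ : Nat → STm},
      (∀ n ty, Γ[n]? = some ty → Typing' Δ (σ n) ty) →
      Typing' Δ (M.subst σ) τ := by
  induction h with
  | star Γ τs => intro Δ σ hσ; exact Typing'.star Δ τs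
  | var Γ n M A B C D hget hM ih =>
      intro Δ σ hσ
      exact comp_typing' (hσ n _ hget) rfl (ih hσ)
  | abs Γ M ρ A B hM ih =>
      intro Δ σ hσ
      refine Typing'.abs Δ (M.subst (STm.liftS σ)) ρ A B (ih ?_)
      intro n ty hn
      cases n with
      | zero =>
          have : ty = ρ := by
            have := hn; simp at this; exact this.symm
          subst this
          cases ty with
          | arr X Y => exact var_star_typing' (by simp [STm.liftS])
      | succ n =>
          have h1 : Typing' Δ (σ n) ty := hσ n ty (by simpa using hn)
          refine rename_typing' h1 ?_
          intro m ty' hm; simpa [STm.liftS] using hm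
  | app Γ N M ρ A B hN hM ihN ihM =>
      intro Δ σ hσ
      exact Typing'.app Δ (N.subst σ) (M.subst σ) ρ A B (ihN hσ) (ihM hσ)

lemma subst1_typing' {Γ : List STy} {N M : STm} {ρ τ : STy}
    (hN : Typing' Γ N ρ) (hM : Typing' (ρ :: Γ) M τ) :
    Typing' Γ (STm.subst1 N M) τ := by
  refine subst_typing' hM ?_
  intro n ty hn
  cases n with
  | zero =>
      have : ty = ρ := by
        have := hn; simp at this; exact this.symm
      subst this; exact hN
  | succ n =>
      have hn' : Γ[n]? = some ty := by simpa using hn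
      cases ty with
      | arr A B => exact var_star_typing' hn'

lemma subject_reduction' {N M : STm} (h : SStep N M) :
    ∀ {Γ τ}, Typing' Γ N τ → Typing' Γ M τ := by
  induction h with
  | beta N M =>
      intro Γ τ hτ
      cases hτ with
      | app _ _ _ ρ A B hN hP =>
          cases hP with
          | abs _ _ _ _ _ hM => exact subst1_typing' hN hM
  | var n hs ih =>
      intro Γ τ hτ
      cases hτ with
      | var Γ n M A B C D hget hM => exact Typing'.var Γ n _ A B C D hget (ih hM)
  | pushL N hs ih =>
      intro Γ τ hτ
      cases hτ with
      | app Γ N M ρ A B hN hM => exact Typing'.app Γ N _ ρ A B hN (ih hM)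
  | pushArg M hs ih =>
      intro Γ τ hτ
      cases hτ with
      | app Γ N M ρ A B hN hM => exact Typing'.app Γ _ M ρ A B (ih hN) hM
  | pop hs ih =>
      intro Γ τ hτ
      cases hτ with
      | abs Γ M ρ A B hM => exact Typing'.abs Γ _ ρ A B (ih hM)

/-- Subject reduction: if `Γ ⊢ N : τ` and `N` β-reduces in one step to `M`,
then `Γ ⊢ M : τ`. -/
theorem seq_subject_reduction (Γ : List STy) (N M : STm) (τ : STy)
    (hN : Typing Γ N τ) (h : SStep N M) :
    Typing Γ M τ := by
  exact typing'_to_typing (subject_reduction' h (typing_to_typing' hN))
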